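/- Let $p \ge 3$ be odd, let $\lambda_1 > 0$, $|\lambda_j| \le \lambda_1$, and let $a$ be a unit vector with $|v_j^\top a| \le |v_1^\top a|$ for $j \ge 2$, with $v_1^\top a > 0$. With $S_j$ as defined via $S_j = \lambda_j \sum_{s=0}^{(p-3)/2} \frac{c_s}{m^s} (v_j^\top a)^{p-2s-1}$ for positive constants $c_s = (1-\frac{1}{2p})^{p-2s-1}(\frac{1}{2p})^{2s+1}\binom{p}{2s+1}$ and $m > 0$, it holds that $|S_j| \le \frac{|\lambda_j|}{\lambda_1}\cdot\frac{(v_j^\top a)^2}{(v_1^\top a)^2}\, S_1$ for all $j \ge 2$. -/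

import Mathlib

open Finset

lemma aux_sum_bound (x x1 : ℝ) (hx1 : 0 < x1) (hxle : |x| ≤ x1)
    (c : ℕ → ℝ) (hc : ∀ s, 0 ≤ c s) (N p : ℕ)
    (he : ∀ s < N, 2 ≤ p - 2 * s - 1) :
    |∑ s ∈ Finset.range N, c s * x ^ (p - 2 * s - 1)| ≤
      x ^ 2 / x1 ^ 2 * ∑ s ∈ Finset.range N, c s * x1 ^ (p - 2 * s - 1) := by
  have hx1ne : x1 ≠ 0 := ne_of_gt hx1
  calc |∑ s ∈ Finset.range N, c s * x ^ (p - 2 * s - 1)|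
      ≤ ∑ s ∈ Finset.range N, |c s * x ^ (p - 2 * s - 1)| :=
        Finset.abs_sum_le_sum_abs _ _
    _ ≤ ∑ s ∈ Finset.range N, x ^ 2 / x1 ^ 2 * (c s * x1 ^ (p - 2 * s - 1)) := by
        apply Finset.sum_le_sum
        intro s hs
        rw [Finset.mem_range] at hs
        have he2 : 2 ≤ p - 2 * s - 1 := he s hs
        set e := p - 2 * s - 1 with hedef
        have h1 : |x ^ e| = x ^ 2 * |x| ^ (e - 2) := by
          rw [abs_pow, ← sq_abs x, ← pow_add]
          congr 1
          omega
        have h2 : x1 ^ e = x1 ^ 2 * x1 ^ (e - 2) := by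
          rw [← pow_add]; congr 1; omega
        rw [abs_mul, abs_of_nonneg (hc s), h1, h2]
        have h3 : |x| ^ (e - 2) ≤ x1 ^ (e - 2) :=
          pow_le_pow_left₀ (abs_nonneg x) hxle _
        calc c s * (x ^ 2 * |x| ^ (e - 2))
            ≤ c s * (x ^ 2 * x1 ^ (e - 2)) := by
              apply mul_le_mul_of_nonneg_left _ (hc s)
              exact mul_le_mul_of_nonneg_left h3 (sq_nonneg x)
          _ = x ^ 2 / x1 ^ 2 * (c s * (x1 ^ 2 * x1 ^ (e - 2))) := by
              field_simp
    _ = x ^ 2 / x1 ^ 2 * ∑ s ∈ Finset.range N, c s * x1 ^ (p - 2 * s - 1) := by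
        rw [← Finset.mul_sum]

/-- Coefficient comparison for odd degree `p`: with
`Sⱼ = λⱼ ∑ₛ (cₛ/mˢ) (vⱼᵀa)^{p-2s-1}`, for every `j ≥ 2` one has
`|Sⱼ| ≤ (|λⱼ|/λ₁) · ((vⱼᵀa)²/(v₁ᵀa)²) · S₁`. -/
theorem coefficient_comparison_odd {d k : ℕ} (hk : 0 < k)
    (p : ℕ) (hp : 3 ≤ p) (hodd : Odd p) (m : ℝ) (hm : 0 < m)
    (v : Fin k → EuclideanSpace ℝ (Fin d))
    (hv : Orthonormal ℝ v)
    (lam : Fin k → ℝ)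
    (hlam1 : 0 < lam ⟨0, hk⟩)
    (hlam : ∀ j, |lam j| ≤ lam ⟨0, hk⟩)
    (a : EuclideanSpace ℝ (Fin d)) (ha : ‖a‖ = 1)
    (hpos : 0 < (inner ℝ (v ⟨0, hk⟩) a : ℝ))
    (hle : ∀ j : Fin k, j ≠ ⟨0, hk⟩ →
      |(inner ℝ (v j) a : ℝ)| ≤ |(inner ℝ (v ⟨0, hk⟩) a : ℝ)|)
    (S : Fin k → ℝ)
    (hS : ∀ j, S j = lam j * ∑ s ∈ Finset.range ((p - 3) / 2 + 1),
      ((1 - 1 / (2 * (p : ℝ))) ^ (p - 2 * s - 1) * (1 / (2 * (p : ℝ))) ^ (2 * s + 1)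
        * (Nat.choose p (2 * s + 1) : ℝ) / m ^ s)
        * ((inner ℝ (v j) a : ℝ)) ^ (p - 2 * s - 1)) :
    ∀ j : Fin k, j ≠ ⟨0, hk⟩ →
      |S j| ≤ (|lam j| / lam ⟨0, hk⟩) *
        (((inner ℝ (v j) a : ℝ)) ^ 2 / ((inner ℝ (v ⟨0, hk⟩) a : ℝ)) ^ 2) *
        S ⟨0, hk⟩ := by
  intro j hj
  have hp0 : (0:ℝ) < (p:ℝ) := by exact_mod_cast (by omega : 0 < p)
  have hxle : |(inner ℝ (v j) a : ℝ)| ≤ (inner ℝ (v ⟨0, hk⟩) a : ℝ) := by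
    have h := hle j hj
    rwa [abs_of_pos hpos] at h
  have hlamne : lam ⟨0, hk⟩ ≠ 0 := ne_of_gt hlam1
  have hc : ∀ s : ℕ, 0 ≤ (1 - 1 / (2 * (p : ℝ))) ^ (p - 2 * s - 1)
      * (1 / (2 * (p : ℝ))) ^ (2 * s + 1)
      * (Nat.choose p (2 * s + 1) : ℝ) / m ^ s := by
    intro s
    have h1 : (0:ℝ) ≤ 1 - 1 / (2 * (p:ℝ)) := by
      have hp3 : (3:ℝ) ≤ (p:ℝ) := by exact_mod_cast hp
      have h2 : 1 / (2 * (p:ℝ)) ≤ 1 := by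
        rw [div_le_one (by positivity)]
        linarith
      linarith
    exact div_nonneg (mul_nonneg (mul_nonneg (pow_nonneg h1 _)
      (pow_nonneg (by positivity) _)) (Nat.cast_nonneg _)) (pow_nonneg hm.le _)
  have hsum := aux_sum_bound (inner ℝ (v j) a : ℝ) (inner ℝ (v ⟨0, hk⟩) a : ℝ) hpos hxle
    (fun s => (1 - 1 / (2 * (p : ℝ))) ^ (p - 2 * s - 1) * (1 / (2 * (p : ℝ))) ^ (2 * s + 1)
        * (Nat.choose p (2 * s + 1) : ℝ) / m ^ s) hc ((p - 3) / 2 + 1) p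
    (by intro s hs; omega)
  rw [hS j, hS ⟨0, hk⟩, abs_mul]
  have hrw : ∀ (l1 lj y y1 T1 : ℝ), l1 ≠ 0 → y1 ≠ 0 →
      |lj| / l1 * (y ^ 2 / y1 ^ 2) * (l1 * T1) = |lj| * (y ^ 2 / y1 ^ 2 * T1) := by
    intro l1 lj y y1 T1 h1 h2
    field_simp
  rw [hrw _ _ _ _ _ hlamne (ne_of_gt hpos)]
  exact mul_le_mul_of_nonneg_left hsum (abs_nonneg _)
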